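/- Let f_1,…,f_T be continuously differentiable convex functions on ℝ^d and let H_1,…,H_T be positive definite d×d matrices. Given w_1 ∈ ℝ^d and η > 0, define the iterates w_{t+1} = w_t − η·H_t^{−1} g_t where g_t = ∇f_t(w_t). Then for any w* ∈ ℝ^d: Σ_{t=1}^{T} f_t(w_t) − Σ_{t=1}^{T} f_t(w*) ≤ (1/(2η))·Σ_{t=1}^{T} (‖w_t − w*‖²_{H_t} − ‖w_{t+1} − w*‖²_{H_t}) + (η/2)·Σ_{t=1}^{T} (‖g_t‖*_{H_t})². -/

import Mathlib

open Matrix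

lemma grad_ineq {d : ℕ} (f : (Fin d → ℝ) → ℝ) (hconv : ConvexOn ℝ Set.univ f)
    (hdiff : ContDiff ℝ 1 f) (x y : Fin d → ℝ) :
    f x - f y ≤ fderiv ℝ f x (x - y) := by
  set v : Fin d → ℝ := y - x with hv
  set φ : ℝ → ℝ := fun s => f (x + s • v) with hφ
  have hφconv : ConvexOn ℝ Set.univ φ := by
    refine ⟨convex_univ, fun a _ b _ μ ν hμ hν hμν => ?_⟩
    have key : x + (μ * a + ν * b) • v = μ • (x + a • v) + ν • (x + b • v) := by
      have : (μ + ν) • x = x := by rw [hμν, one_smul]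
      rw [smul_add, smul_add, smul_smul, smul_smul, add_smul]
      have hx : μ • x + ν • x = x := by rw [← add_smul, hμν, one_smul]
      rw [show μ • x + (μ * a) • v + (ν • x + (ν * b) • v) = (μ • x + ν • x) + ((μ*a) • v + (ν*b) • v) from by abel, hx]
    simpa [hφ, smul_eq_mul, key] using
      hconv.2 (Set.mem_univ (x + a • v)) (Set.mem_univ (x + b • v)) hμ hν hμν
  have hinner : HasDerivAt (fun s : ℝ => x + s • v) v 0 := by
    simpa using ((hasDerivAt_id (0:ℝ)).smul_const v).const_add x
  have hderiv : HasDerivAt φ (fderiv ℝ f x v) 0 := by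
    have hf : HasFDerivAt f (fderiv ℝ f x) (x + (0:ℝ) • v) := by
      simpa using ((hdiff.differentiable one_ne_zero) x).hasFDerivAt
    exact hf.comp_hasDerivAt 0 hinner
  have := hφconv.le_slope_of_hasDerivAt (Set.mem_univ 0) (Set.mem_univ 1) one_pos hderiv
  have hs : slope φ 0 1 = f y - f x := by
    simp [slope, hφ, hv]
  rw [hs] at this
  have : fderiv ℝ f x v ≤ f y - f x := this
  have h2 : fderiv ℝ f x (x - y) = -(fderiv ℝ f x v) := by
    rw [← map_neg]
    congr 1
    simp [hv]
  linarith

lemma dot_identity {d : ℕ} (Hm : Matrix (Fin d) (Fin d) ℝ) (hHm : Hm.PosDef)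
    (a gv : Fin d → ℝ) (η : ℝ) (hη : 0 < η) :
    gv ⬝ᵥ a = (1 / (2 * η)) * (a ⬝ᵥ Hm.mulVec a -
      (a - η • Hm⁻¹.mulVec gv) ⬝ᵥ Hm.mulVec (a - η • Hm⁻¹.mulVec gv)) +
      (η / 2) * (gv ⬝ᵥ Hm⁻¹.mulVec gv) := by
  have hdet : IsUnit Hm.det := hHm.det_pos.ne'.isUnit
  have hmul : Hm * Hm⁻¹ = 1 := Matrix.mul_nonsing_inv Hm hdet
  have hsymm : Hmᵀ = Hm := hHm.1.eq  -- IsHermitian on ℝ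
  have key1 : ∀ u : Fin d → ℝ, u ⬝ᵥ Hm.mulVec (Hm⁻¹.mulVec gv) = u ⬝ᵥ gv := by
    intro u
    rw [Matrix.mulVec_mulVec, hmul, Matrix.one_mulVec]
  have key2 : ∀ u : Fin d → ℝ, (Hm⁻¹.mulVec gv) ⬝ᵥ Hm.mulVec u = gv ⬝ᵥ u := by
    intro u
    rw [Matrix.dotProduct_mulVec, show (Hm⁻¹ *ᵥ gv) ᵥ* Hm = Hm *ᵥ (Hm⁻¹ *ᵥ gv)
      from by rw [← Matrix.mulVec_transpose, hsymm], Matrix.mulVec_mulVec, hmul,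
      Matrix.one_mulVec]
  have expand : (a - η • Hm⁻¹.mulVec gv) ⬝ᵥ Hm.mulVec (a - η • Hm⁻¹.mulVec gv)
      = a ⬝ᵥ Hm.mulVec a - 2 * η * (gv ⬝ᵥ a) + η ^ 2 * (gv ⬝ᵥ Hm⁻¹.mulVec gv) := by
    rw [Matrix.mulVec_sub, sub_dotProduct, dotProduct_sub,
      dotProduct_sub, Matrix.mulVec_smul, smul_dotProduct,
      dotProduct_smul, dotProduct_smul, smul_dotProduct]
    rw [key1 a, key2 a, key2 (Hm⁻¹.mulVec gv), dotProduct_comm a gv]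
    simp only [smul_eq_mul]
    ring
  rw [expand]
  field_simp
  ring

/-- preconditioned online gradient descent regret decomposition.
For continuously differentiable convex `f_t`, positive definite `H_t`, and iterates
`w_{t+1} = w_t − η·H_t⁻¹ g_t` with `g_t = ∇f_t(w_t)`, the regret against any `w*`
is bounded by the stated sum, where `‖x‖²_{H} = xᵀHx` and `(‖g‖*_{H})² = gᵀH⁻¹g`. -/
theorem preconditioned_gd_regret
    {d : ℕ} (T : ℕ)
    (f : ℕ → (Fin d → ℝ) → ℝ)
    (hconv : ∀ t, ConvexOn ℝ Set.univ (f t))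
    (hdiff : ∀ t, ContDiff ℝ 1 (f t))
    (H : ℕ → Matrix (Fin d) (Fin d) ℝ)
    (hH : ∀ t, (H t).PosDef)
    (w g : ℕ → Fin d → ℝ)
    (η : ℝ) (hη : 0 < η)
    (hg : ∀ t, ∀ v : Fin d → ℝ, fderiv ℝ (f t) (w t) v = g t ⬝ᵥ v)
    (hw : ∀ t, w (t + 1) = w t - η • (H t)⁻¹.mulVec (g t))
    (wstar : Fin d → ℝ) :
    ∑ t ∈ Finset.Icc 1 T, f t (w t) - ∑ t ∈ Finset.Icc 1 T, f t wstar ≤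
      (1 / (2 * η)) * ∑ t ∈ Finset.Icc 1 T,
          ((w t - wstar) ⬝ᵥ (H t).mulVec (w t - wstar) -
            (w (t + 1) - wstar) ⬝ᵥ (H t).mulVec (w (t + 1) - wstar)) +
        (η / 2) * ∑ t ∈ Finset.Icc 1 T, g t ⬝ᵥ (H t)⁻¹.mulVec (g t) := by
  have hterm : ∀ t, f t (w t) - f t wstar ≤
      (1 / (2 * η)) * ((w t - wstar) ⬝ᵥ (H t).mulVec (w t - wstar) -
        (w (t + 1) - wstar) ⬝ᵥ (H t).mulVec (w (t + 1) - wstar)) +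
      (η / 2) * (g t ⬝ᵥ (H t)⁻¹.mulVec (g t)) := by
    intro t
    have h1 : f t (w t) - f t wstar ≤ g t ⬝ᵥ (w t - wstar) := by
      have := grad_ineq (f t) (hconv t) (hdiff t) (w t) wstar
      rwa [hg t] at this
    have hiter : w (t + 1) - wstar = (w t - wstar) - η • (H t)⁻¹.mulVec (g t) := by
      rw [hw t]; abel
    have h2 := dot_identity (H t) (hH t) (w t - wstar) (g t) η hη
    rw [← hiter] at h2
    linarith
  rw [← Finset.sum_sub_distrib, Finset.mul_sum, Finset.mul_sum, ← Finset.sum_add_distrib]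
  exact Finset.sum_le_sum fun t _ => hterm t
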